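/- Suppose the equation u_{xy} = F admits an x-symmetry driver; let k be the smallest order of such a driver, and assume H_1, …, H_k are all nonzero in Frac(R). Then: (i) H_{k+1} = 0; (ii) there exists a nonzero ψ ∈ R with D̄(ψ) = (∂F/∂u_1)·ψ; and (iii) every x-symmetry driver of order k equals the operator 𝓜 given by the Laplace factorization formula with r = k+1 for some nonzero ψ ∈ R satisfying D̄(ψ) = (∂F/∂u_1)·ψ. -/
import Mathlib


open MvPolynomial

noncomputable section

/-- Variables of the ring R = K[x, y, u₀, u₁, …, ū₁, ū₂, …].
`Var.ubar j` denotes the variable ū_{j+1}, so that `Var.ubar 0 = ū₁`. -/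
inductive Var : Type
  | x : Var
  | y : Var
  | u : ℕ → Var
  | ubar : ℕ → Var
  deriving DecidableEq

/-- The ring R. -/
abbrev RR (K : Type*) [CommSemiring K] : Type _ := MvPolynomial Var K

variable {K : Type*} [Field K] [CharZero K]

/-- The subring 𝓕 ⊆ R of polynomials not involving any ū_j. -/
def Fcal (K : Type*) [CommSemiring K] : Subalgebra K (RR K) :=
  MvPolynomial.supported K {v : Var | ∀ j : ℕ, v ≠ Var.ubar j}

/-- The set of variables that F may involve: x, y, u₀, u₁, ū₁. -/
def Fvars : Set Var := {Var.x, Var.y, Var.u 0, Var.u 1, Var.ubar 0}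

/-- `D` and `Dbar` are the total derivatives with respect to x and y on solutions
of u_{xy} = F, i.e. the K-derivations determined by mutual recursion by
D(x) = 1, D(y) = 0, D(uᵢ) = u_{i+1}, D(ū_i) = D̄^{i-1}(F) (i ≥ 1);
D̄(y) = 1, D̄(x) = 0, D̄(u₀) = ū₁, D̄(u_i) = D^{i-1}(F) (i ≥ 1), D̄(ū_i) = ū_{i+1}.
(Recall `Var.ubar j` denotes ū_{j+1}.)  -/
structure IsTotalDerPair (F : RR K) (D Dbar : Derivation K (RR K) (RR K)) : Prop where
  hDx : D (X Var.x) = 1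
  hDy : D (X Var.y) = 0
  hDu : ∀ i : ℕ, D (X (Var.u i)) = X (Var.u (i + 1))
  hDubar : ∀ j : ℕ, D (X (Var.ubar j)) = (⇑Dbar)^[j] F
  hDbary : Dbar (X Var.y) = 1
  hDbarx : Dbar (X Var.x) = 0
  hDbaru0 : Dbar (X (Var.u 0)) = X (Var.ubar 0)
  hDbaru : ∀ i : ℕ, Dbar (X (Var.u (i + 1))) = (⇑D)^[i] F
  hDbarubar : ∀ j : ℕ, Dbar (X (Var.ubar j)) = X (Var.ubar (j + 1))

/-- `g` is a symmetry of the equation u_{xy} = F: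
D(D̄(g)) − F_{u₁}·D(g) − F_{ū₁}·D̄(g) − F_{u₀}·g = 0. -/
def IsSymmetry (F : RR K) (D Dbar : Derivation K (RR K) (RR K)) (g : RR K) : Prop :=
  D (Dbar g) - pderiv (Var.u 1) F * D g - pderiv (Var.ubar 0) F * Dbar g
    - pderiv (Var.u 0) F * g = 0

/-- The differential operator Σ_{i=0}^k ξ_i·Df^i applied to `a`. -/
def opApply {A : Type*} [CommRing A] (Df : A → A) (ξ : ℕ → A) (k : ℕ) (a : A) : A :=
  ∑ i ∈ Finset.range (k + 1), ξ i * Df^[i] a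

/-- `ξ 0, …, ξ k` are the coefficients of an x-symmetry driver of order `k`:
`ξ k ≠ 0` and Σ ξ_i·D^i maps every x-integral to a symmetry. -/
def IsDriver (F : RR K) (D Dbar : Derivation K (RR K) (RR K)) (k : ℕ) (ξ : ℕ → RR K) : Prop :=
  ξ k ≠ 0 ∧ ∀ W : RR K, Dbar W = 0 → IsSymmetry F D Dbar (opApply ⇑D ξ k W)

/-- The Fréchet derivative a_* = Σ_{i≥0} (∂a/∂uᵢ)·D^i applied to `g`. -/
def frechet (D : Derivation K (RR K) (RR K)) (a g : RR K) : RR K :=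
  ∑ᶠ i : ℕ, pderiv (Var.u i) a * (⇑D)^[i] g

/-- The Lie bracket [f, g] = g_*(f) − f_*(g). -/
def lieBracket (D : Derivation K (RR K) (RR K)) (f g : RR K) : RR K :=
  frechet D g f - frechet D f g

/-- The fraction field Frac(R). -/
abbrev FF (K : Type*) [Field K] : Type _ := FractionRing (RR K)

/-- `DF` extends the derivation `D` of R to the fraction field Frac(R). -/
def ExtendsTo (D : Derivation K (RR K) (RR K)) (DF : Derivation K (FF K) (FF K)) : Prop :=
  ∀ p : RR K, DF (algebraMap (RR K) (FF K) p) = algebraMap (RR K) (FF K) (D p)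

/-- The Laplace invariant H₁ = −D(F_{u₁}) + F_{u₁}·F_{ū₁} + F_{u₀} (computed in R). -/
def H1R (F : RR K) (D : Derivation K (RR K) (RR K)) : RR K :=
  -(D (pderiv (Var.u 1) F)) + pderiv (Var.u 1) F * pderiv (Var.ubar 0) F
    + pderiv (Var.u 0) F

/-- The Laplace invariant H₀ = −D̄(F_{ū₁}) + F_{u₁}·F_{ū₁} + F_{u₀} (computed in R). -/
def H0R (F : RR K) (Dbar : Derivation K (RR K) (RR K)) : RR K :=
  -(Dbar (pderiv (Var.ubar 0) F)) + pderiv (Var.u 1) F * pderiv (Var.ubar 0) F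
    + pderiv (Var.u 0) F

/-- The sequence of Laplace invariants in Frac(R), defined by
H_{i+1} = 2H_i − H_{i−1} − D(D̄(H_i)/H_i) (whenever H_i ≠ 0; division is the field
division of Frac(R)). -/
def Hseq (Df Dbarf : FF K → FF K) (H0 H1 : FF K) : ℕ → FF K
  | 0 => H0
  | 1 => H1
  | (n + 2) =>
      2 * Hseq Df Dbarf H0 H1 (n + 1) - Hseq Df Dbarf H0 H1 n
        - Df (Dbarf (Hseq Df Dbarf H0 H1 (n + 1)) / Hseq Df Dbarf H0 H1 (n + 1))

/-- Auxiliary composition: `lapAux Df c H j g` is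
(1/H₁)(D − c) ∘ (1/H₂)(D − c) ∘ ⋯ ∘ (1/H_j)(D − c) ∘ g. -/
def lapAux (Df : FF K → FF K) (c : FF K) (H : ℕ → FF K) : ℕ → (FF K → FF K) → FF K → FF K
  | 0, g, a => g a
  | (j + 1), g, a => lapAux Df c H j (fun b => (Df (g b) - c * g b) / H (j + 1)) a

/-- The Laplace factorization formula: for r > 1,
𝓜 = (1/H₁)(D − F_{ū₁}) ∘ ⋯ ∘ (1/H_{r−1})(D − F_{ū₁}) ∘ (H_{r−1}⋯H₁·ψ ·);
for r = 1, 𝓜 is multiplication by ψ. -/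
def lapM (Df : FF K → FF K) (c : FF K) (H : ℕ → FF K) (ψ : FF K) (r : ℕ) : FF K → FF K :=
  lapAux Df c H (r - 1) (fun a => (∏ i ∈ Finset.Icc 1 (r - 1), H i) * ψ * a)

/-- The symmetry condition, understood in Frac(R). -/
def IsSymmetryFF (F : RR K) (DF DbarF : Derivation K (FF K) (FF K)) (g : FF K) : Prop :=
  DF (DbarF g) - algebraMap (RR K) (FF K) (pderiv (Var.u 1) F) * DF g
    - algebraMap (RR K) (FF K) (pderiv (Var.ubar 0) F) * DbarF g
    - algebraMap (RR K) (FF K) (pderiv (Var.u 0) F) * g = 0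


/-! ### Auxiliary lemmas -/

lemma descFactorial_succ_left (m j : ℕ) :
    (m + 1).descFactorial (j + 1) = m.descFactorial (j + 1) + (j + 1) * m.descFactorial j := by
  rcases le_or_gt j m with h | h
  · rw [Nat.succ_descFactorial_succ, Nat.descFactorial_succ]
    have hm : m + 1 = (m - j) + (j + 1) := by omega
    rw [hm, Nat.add_mul]
  · rw [Nat.descFactorial_eq_zero_iff_lt.mpr h,
      Nat.descFactorial_eq_zero_iff_lt.mpr (by omega : m < j + 1),
      Nat.succ_descFactorial_succ, Nat.descFactorial_eq_zero_iff_lt.mpr h]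
    simp

/-- If `∑_{j=0}^n A_j (m)_j x^{n-j} = 0` for all `m`, then all `A_j = 0`. -/
lemma lemA : ∀ (n : ℕ) (A : ℕ → RR K),
    (∀ m : ℕ, ∑ j ∈ Finset.range (n + 1),
      A j * (Nat.descFactorial m j : RR K) * (X Var.x) ^ (n - j) = 0) →
    ∀ j ≤ n, A j = 0 := by
  intro n
  induction n with
  | zero =>
    intro A h j hj
    interval_cases j
    simpa using h 0
  | succ n ih =>
    intro A h j hj
    have hA0 : A 0 = 0 := by
      have h0 := h 0
      rw [Finset.sum_eq_single_of_mem 0 (by simp)] at h0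
      · have hx : (X Var.x : RR K) ^ (n + 1) ≠ 0 := pow_ne_zero _ (X_ne_zero (R := K) Var.x)
        simpa [hx] using h0
      · intro b _ hb
        obtain ⟨i, rfl⟩ := Nat.exists_eq_succ_of_ne_zero hb
        simp [Nat.descFactorial_eq_zero_iff_lt.mpr (Nat.succ_pos i)]
    have hdiff : ∀ m : ℕ, ∑ j ∈ Finset.range (n + 1),
        (((j : RR K) + 1) * A (j + 1)) * (Nat.descFactorial m j : RR K)
          * (X Var.x) ^ (n - j) = 0 := by
      intro m
      have h1 := h (m + 1)
      have h2 := h m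
      have e1 : (∑ j ∈ Finset.range (n + 2),
            A j * (Nat.descFactorial (m+1) j : RR K) * (X Var.x) ^ (n + 1 - j))
          = (∑ j ∈ Finset.range (n + 2),
            A j * (Nat.descFactorial m j : RR K) * (X Var.x) ^ (n + 1 - j))
          + ∑ j ∈ Finset.range (n + 1),
            (((j : RR K) + 1) * A (j + 1)) * (Nat.descFactorial m j : RR K)
              * (X Var.x) ^ (n - j) := by
        rw [Finset.sum_range_succ' (fun j => A j * (Nat.descFactorial (m+1) j : RR K)
            * (X Var.x) ^ (n + 1 - j)) (n + 1),
          Finset.sum_range_succ' (fun j => A j * (Nat.descFactorial m j : RR K)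
            * (X Var.x) ^ (n + 1 - j)) (n + 1)]
        simp only [Nat.descFactorial_zero, Nat.cast_one]
        rw [add_right_comm, ← Finset.sum_add_distrib]
        congr 1
        refine Finset.sum_congr rfl ?_
        intro i _
        have hc : ((m + 1).descFactorial (i + 1) : RR K)
            = (m.descFactorial (i + 1) : RR K) + ((i : RR K) + 1) * (m.descFactorial i) := by
          rw [descFactorial_succ_left]
          push_cast
          ring
        rw [hc]
        have he : n + 1 - (i + 1) = n - i := by omega
        rw [he]
        ring
      rw [h1, h2] at e1
      simpa using e1.symm
    have := ih (fun j => ((j : RR K) + 1) * A (j + 1)) hdiff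
    rcases Nat.eq_zero_or_pos j with rfl | hjpos
    · exact hA0
    · obtain ⟨i, rfl⟩ := Nat.exists_eq_succ_of_ne_zero (Nat.pos_iff_ne_zero.mp hjpos)
      have hi := this i (by omega)
      have hne : ((i : RR K) + 1) ≠ 0 := Nat.cast_add_one_ne_zero i
      exact (mul_eq_zero.mp hi).resolve_left hne

/-- Version of `lemA` with exponents `m - j`. -/
lemma lemA' (n : ℕ) (A : ℕ → RR K)
    (h : ∀ m : ℕ, ∑ j ∈ Finset.range (n + 1),
      A j * (Nat.descFactorial m j : RR K) * (X Var.x) ^ (m - j) = 0) :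
    ∀ j ≤ n, A j = 0 := by
  apply lemA n A
  intro m
  have key : (X Var.x : RR K) ^ m * (∑ j ∈ Finset.range (n + 1),
        A j * (Nat.descFactorial m j : RR K) * (X Var.x) ^ (n - j))
      = (X Var.x) ^ n * (∑ j ∈ Finset.range (n + 1),
        A j * (Nat.descFactorial m j : RR K) * (X Var.x) ^ (m - j)) := by
    rw [Finset.mul_sum, Finset.mul_sum]
    refine Finset.sum_congr rfl ?_
    intro j hj
    rcases le_or_gt j m with hjm | hjm
    · have hjn : j ≤ n := by simpa [Nat.lt_succ_iff] using hj
      have e : m + (n - j) = n + (m - j) := by omega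
      calc (X Var.x : RR K) ^ m * (A j * (Nat.descFactorial m j : RR K) * (X Var.x) ^ (n - j))
          = A j * (Nat.descFactorial m j : RR K) * (X Var.x) ^ (m + (n - j)) := by
            rw [pow_add]; ring
        _ = A j * (Nat.descFactorial m j : RR K) * (X Var.x) ^ (n + (m - j)) := by rw [e]
        _ = (X Var.x) ^ n * (A j * (Nat.descFactorial m j : RR K) * (X Var.x) ^ (m - j)) := by
            rw [pow_add]; ring
    · simp [Nat.descFactorial_eq_zero_iff_lt.mpr hjm]
  rw [h m, mul_zero] at key
  exact (mul_eq_zero.mp key).resolve_left (pow_ne_zero _ (X_ne_zero (R := K) Var.x))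

/-- Iterated `D` on powers of x. -/
lemma D_iter_X_pow (D : Derivation K (RR K) (RR K)) (hDx : D (X Var.x) = 1) :
    ∀ (i m : ℕ), (⇑D)^[i] ((X Var.x : RR K) ^ m)
      = (Nat.descFactorial m i : RR K) * (X Var.x) ^ (m - i) := by
  intro i
  induction i with
  | zero => intro m; simp
  | succ i ih =>
    intro m
    rw [Function.iterate_succ_apply', ih m]
    have hD : D ((X Var.x : RR K) ^ (m - i)) = ((m - i : ℕ) : RR K) * (X Var.x) ^ (m - i - 1) := by
      rw [Derivation.leibniz_pow, hDx]
      simp [nsmul_eq_mul, smul_eq_mul]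
    rw [Derivation.leibniz, hD]
    have hcast : D ((Nat.descFactorial m i : RR K)) = 0 := by
      simpa using D.map_natCast (m.descFactorial i)
    rw [hcast]
    have : m - i - 1 = m - (i + 1) := by omega
    rw [this]
    have hdf : (Nat.descFactorial m (i + 1) : RR K)
        = ((m - i : ℕ) : RR K) * (Nat.descFactorial m i : RR K) := by
      rw [Nat.descFactorial_succ]; push_cast; ring
    rw [hdf]
    simp [smul_eq_mul]
    ring

lemma Dbar_X_pow (Dbar : Derivation K (RR K) (RR K)) (hDbarx : Dbar (X Var.x) = 0) (m : ℕ) :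
    Dbar ((X Var.x : RR K) ^ m) = 0 := by
  rw [Derivation.leibniz_pow, hDbarx]
  simp

/-- The linearization operator L. -/
def Lop (F : RR K) (D Dbar : Derivation K (RR K) (RR K)) (p : RR K) : RR K :=
  D (Dbar p) - pderiv (Var.u 1) F * D p - pderiv (Var.ubar 0) F * Dbar p
    - pderiv (Var.u 0) F * p

/-- The operator E = D̄ − F_{u₁}. -/
def Eop (F : RR K) (Dbar : Derivation K (RR K) (RR K)) (p : RR K) : RR K :=
  Dbar p - pderiv (Var.u 1) F * p

/-- The coefficients of `L ∘ M` (as an operator on x-integrals). -/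
def Acoef (F : RR K) (D Dbar : Derivation K (RR K) (RR K)) (k : ℕ) (ξ : ℕ → RR K)
    (j : ℕ) : RR K :=
  (if j ≤ k then Lop F D Dbar (ξ j) else 0)
    + (if 1 ≤ j then Eop F Dbar (ξ (j - 1)) else 0)

lemma driver_coeffs (F : RR K) (D Dbar : Derivation K (RR K) (RR K))
    (hDx : D (X Var.x) = 1) (hDbarx : Dbar (X Var.x) = 0)
    (k : ℕ) (ξ : ℕ → RR K) (hdrv : IsDriver F D Dbar k ξ) :
    ∀ j ≤ k + 1, Acoef F D Dbar k ξ j = 0 := by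
  apply lemA' (k + 1)
  intro m
  set w : RR K := (X Var.x : RR K) ^ m with hwdef
  have hDiw : ∀ i, (⇑D)^[i] w = (Nat.descFactorial m i : RR K) * (X Var.x) ^ (m - i) :=
    fun i => D_iter_X_pow D hDx i m
  have hDbarDiw : ∀ i, Dbar ((⇑D)^[i] w) = 0 := by
    intro i
    rw [hDiw i, Derivation.leibniz]
    have h1 : Dbar ((X Var.x : RR K) ^ (m - i)) = 0 := Dbar_X_pow Dbar hDbarx _
    have h2 : Dbar ((Nat.descFactorial m i : RR K)) = 0 := by
      simpa using Dbar.map_natCast (m.descFactorial i)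
    rw [h1, h2]
    simp
  have hDsucc : ∀ i, D ((⇑D)^[i] w) = (⇑D)^[i + 1] w :=
    fun i => (Function.iterate_succ_apply' ⇑D i w).symm
  have hw : Dbar w = 0 := Dbar_X_pow Dbar hDbarx m
  have hsym := hdrv.2 w hw
  unfold IsSymmetry at hsym
  have hg : opApply ⇑D ξ k w = ∑ i ∈ Finset.range (k + 1), ξ i * (⇑D)^[i] w := rfl
  have hDbarg : Dbar (opApply ⇑D ξ k w)
      = ∑ i ∈ Finset.range (k + 1), (⇑D)^[i] w * Dbar (ξ i) := by
    rw [hg, map_sum Dbar _ _]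
    refine Finset.sum_congr rfl ?_
    intro i _
    show Dbar (ξ i * (⇑D)^[i] w) = _
    rw [Derivation.leibniz, hDbarDiw i]
    simp [smul_eq_mul]
  have hDg : D (opApply ⇑D ξ k w)
      = ∑ i ∈ Finset.range (k + 1), (ξ i * (⇑D)^[i + 1] w + (⇑D)^[i] w * D (ξ i)) := by
    rw [hg, map_sum D _ _]
    refine Finset.sum_congr rfl ?_
    intro i _
    show D (ξ i * (⇑D)^[i] w) = _
    rw [Derivation.leibniz, hDsucc i]
    simp [smul_eq_mul]
  have hDDbarg : D (Dbar (opApply ⇑D ξ k w))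
      = ∑ i ∈ Finset.range (k + 1),
        ((⇑D)^[i] w * D (Dbar (ξ i)) + Dbar (ξ i) * (⇑D)^[i + 1] w) := by
    rw [hDbarg, map_sum D _ _]
    refine Finset.sum_congr rfl ?_
    intro i _
    show D ((⇑D)^[i] w * Dbar (ξ i)) = _
    rw [Derivation.leibniz, hDsucc i]
    simp [smul_eq_mul]
  have e1 : ∑ i ∈ Finset.range (k + 1),
      (Lop F D Dbar (ξ i) * (⇑D)^[i] w + Eop F Dbar (ξ i) * (⇑D)^[i + 1] w) = 0 := by
    calc ∑ i ∈ Finset.range (k + 1),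
        (Lop F D Dbar (ξ i) * (⇑D)^[i] w + Eop F Dbar (ξ i) * (⇑D)^[i + 1] w)
        = D (Dbar (opApply ⇑D ξ k w)) - pderiv (Var.u 1) F * D (opApply ⇑D ξ k w)
          - pderiv (Var.ubar 0) F * Dbar (opApply ⇑D ξ k w)
          - pderiv (Var.u 0) F * (opApply ⇑D ξ k w) := by
          rw [hDDbarg, hDg, hDbarg, hg, Finset.mul_sum, Finset.mul_sum, Finset.mul_sum,
            ← Finset.sum_sub_distrib, ← Finset.sum_sub_distrib, ← Finset.sum_sub_distrib]
          refine Finset.sum_congr rfl ?_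
          intro i _
          unfold Lop Eop
          ring
      _ = 0 := hsym
  calc ∑ j ∈ Finset.range (k + 1 + 1),
      Acoef F D Dbar k ξ j * (Nat.descFactorial m j : RR K) * (X Var.x) ^ (m - j)
      = (∑ j ∈ Finset.range (k + 2),
          (if j ≤ k then Lop F D Dbar (ξ j) else 0)
            * ((Nat.descFactorial m j : RR K) * (X Var.x) ^ (m - j)))
        + ∑ j ∈ Finset.range (k + 2),
          (if 1 ≤ j then Eop F Dbar (ξ (j - 1)) else 0)
            * ((Nat.descFactorial m j : RR K) * (X Var.x) ^ (m - j)) := by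
        rw [← Finset.sum_add_distrib]
        refine Finset.sum_congr rfl ?_
        intro j _
        unfold Acoef
        ring
    _ = (∑ i ∈ Finset.range (k + 1), Lop F D Dbar (ξ i) * (⇑D)^[i] w)
        + ∑ i ∈ Finset.range (k + 1), Eop F Dbar (ξ i) * (⇑D)^[i + 1] w := by
        congr 1
        · rw [Finset.sum_range_succ]
          simp only [Nat.lt_irrefl, if_neg (by omega : ¬ (k + 1 ≤ k)), zero_mul, add_zero]
          refine Finset.sum_congr rfl ?_
          intro j hj
          have hjk : j ≤ k := by simpa [Nat.lt_succ_iff] using hj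
          rw [if_pos hjk, hDiw j]
        · rw [Finset.sum_range_succ' (fun j => (if 1 ≤ j then Eop F Dbar (ξ (j - 1)) else 0)
            * ((Nat.descFactorial m j : RR K) * (X Var.x) ^ (m - j))) (k + 1)]
          simp only [if_neg (by omega : ¬ (1 ≤ 0)), zero_mul, add_zero]
          refine Finset.sum_congr rfl ?_
          intro i _
          rw [if_pos (by omega : 1 ≤ i + 1), hDiw (i + 1)]
          simp
    _ = ∑ i ∈ Finset.range (k + 1),
        (Lop F D Dbar (ξ i) * (⇑D)^[i] w + Eop F Dbar (ξ i) * (⇑D)^[i + 1] w) := by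
        rw [Finset.sum_add_distrib]
    _ = 0 := e1

lemma extendsTo_iterate (D : Derivation K (RR K) (RR K)) (DF : Derivation K (FF K) (FF K))
    (hDF : ExtendsTo D DF) :
    ∀ (i : ℕ) (p : RR K), (⇑DF)^[i] (algebraMap (RR K) (FF K) p)
      = algebraMap (RR K) (FF K) ((⇑D)^[i] p) := by
  intro i
  induction i with
  | zero => intro p; rfl
  | succ i ih =>
    intro p
    rw [Function.iterate_succ_apply', Function.iterate_succ_apply', ih, hDF]

lemma derivation_zero_of_vanish (δ : Derivation K (FF K) (FF K))
    (h : ∀ p : RR K, δ (algebraMap (RR K) (FF K) p) = 0) : ∀ z : FF K, δ z = 0 := by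
  intro z
  obtain ⟨p, q, hq, hz⟩ := IsFractionRing.div_surjective (A := RR K) z
  have hq0 : algebraMap (RR K) (FF K) q ≠ 0 :=
    IsFractionRing.to_map_ne_zero_of_mem_nonZeroDivisors hq
  have hzq : z * algebraMap (RR K) (FF K) q = algebraMap (RR K) (FF K) p := by
    rw [← hz, div_mul_cancel₀ _ hq0]
  have h2 : algebraMap (RR K) (FF K) q * δ z = 0 := by
    have := congrArg δ hzq
    rwa [Derivation.leibniz, h q, smul_zero, zero_add, smul_eq_mul, h p] at this
  exact (mul_eq_zero.mp h2).resolve_left hq0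

lemma DDbar_comm (F : RR K) (D Dbar : Derivation K (RR K) (RR K))
    (hDD : IsTotalDerPair F D Dbar) :
    ∀ p : RR K, D (Dbar p) = Dbar (D p) := by
  have hext : ⁅D, Dbar⁆ = (0 : Derivation K (RR K) (RR K)) := by
    apply MvPolynomial.derivation_ext
    intro v
    rw [Derivation.commutator_apply]
    match v with
    | Var.x => rw [hDD.hDx, hDD.hDbarx]; simp
    | Var.y => rw [hDD.hDy, hDD.hDbary]; simp
    | Var.u 0 => rw [hDD.hDbaru0, hDD.hDu 0, hDD.hDbaru 0, hDD.hDubar 0]; simp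
    | Var.u (i + 1) =>
        rw [hDD.hDbaru i, hDD.hDu (i + 1), hDD.hDbaru (i + 1),
          ← Function.iterate_succ_apply' ⇑D i F]
        simp
    | Var.ubar j =>
        rw [hDD.hDbarubar j, hDD.hDubar j, hDD.hDubar (j + 1),
          ← Function.iterate_succ_apply' ⇑Dbar j F]
        simp
  intro p
  have := congrFun (congrArg (fun d => (⇑(d : Derivation K (RR K) (RR K)) : RR K → RR K)) hext) p
  simpa [Derivation.commutator_apply, sub_eq_zero] using this

lemma DFDbarF_comm (F : RR K) (D Dbar : Derivation K (RR K) (RR K))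
    (hDD : IsTotalDerPair F D Dbar)
    (DF DbarF : Derivation K (FF K) (FF K))
    (hDF : ExtendsTo D DF) (hDbarF : ExtendsTo Dbar DbarF) :
    ∀ z : FF K, DF (DbarF z) = DbarF (DF z) := by
  have h0 : ∀ p : RR K, ⁅DF, DbarF⁆ (algebraMap (RR K) (FF K) p) = 0 := by
    intro p
    rw [Derivation.commutator_apply, hDbarF, hDF, hDF, hDbarF, DDbar_comm F D Dbar hDD, sub_self]
  intro z
  have := derivation_zero_of_vanish ⁅DF, DbarF⁆ h0 z
  rw [Derivation.commutator_apply] at this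
  exact sub_eq_zero.mp this

set_option maxHeartbeats 1000000 in
/-- The main Laplace-cascade induction. -/
lemma cascade_core
    (DF DbarF : Derivation K (FF K) (FF K))
    (hcomm : ∀ z : FF K, DF (DbarF z) = DbarF (DF z))
    (b' : FF K) (H : ℕ → FF K) (aseq : ℕ → FF K)
    (haseqS : ∀ j, aseq (j + 1) = aseq j + DbarF (H (j + 1)) / H (j + 1))
    (hF1 : ∀ j, - DF (aseq j) + DbarF b' = H (j + 1) - H j)
    (k : ℕ) (hHnz : ∀ i : ℕ, 1 ≤ i → i ≤ k → H i ≠ 0)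
    (zs : ℕ → ℕ → FF K)
    (hzsS : ∀ j i, zs (j + 1) i = DbarF (zs j i) - aseq j * zs j i)
    (hbase1 : zs 1 k = 0)
    (hbase2 : ∀ i ≤ k, DF (zs 1 i) - b' * zs 1 i
      = H 1 * zs 0 i - (if i = 0 then 0 else zs 1 (i - 1))) :
    ∀ j ≤ k, zs (j + 1) (k - j) = 0 ∧
      ∀ i ≤ k - j, DF (zs (j + 1) i) - b' * zs (j + 1) i
        = H (j + 1) * zs j i - (if i = 0 then 0 else zs (j + 1) (i - 1)) := by
  intro j
  induction j with
  | zero => exact fun _ => ⟨hbase1, hbase2⟩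
  | succ j ih =>
    intro hjk
    obtain ⟨P1, P2⟩ := ih (by omega)
    have Hnz : H (j + 1) ≠ 0 := hHnz (j + 1) (by omega) hjk
    have hq : DbarF (H (j + 1)) / H (j + 1) * H (j + 1) = DbarF (H (j + 1)) :=
      div_mul_cancel₀ _ Hnz
    have twist : ∀ θ : FF K, DbarF (H (j + 1) * θ) - aseq (j + 1) * (H (j + 1) * θ)
        = H (j + 1) * (DbarF θ - aseq j * θ) := by
      intro θ
      rw [Derivation.leibniz, smul_eq_mul, smul_eq_mul, haseqS j]
      linear_combination (-θ) * hq
    have hkj : k - j = (k - (j + 1)) + 1 := by omega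
    have htop : zs (j + 1) (k - (j + 1)) = H (j + 1) * zs j (k - j) := by
      have h2 := P2 (k - j) le_rfl
      rw [P1, map_zero, if_neg (by omega : ¬ (k - j = 0))] at h2
      have : k - j - 1 = k - (j + 1) := by omega
      rw [this] at h2
      linear_combination h2
    have newP1 : zs (j + 1 + 1) (k - (j + 1)) = 0 := by
      rw [hzsS (j + 1) (k - (j + 1)), htop, twist (zs j (k - j)), ← hzsS j (k - j), P1,
        mul_zero]
    refine ⟨newP1, ?_⟩
    intro i hi
    set μ : FF K := zs (j + 1) i with hμdef
    set v : FF K := zs j i with hvdef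
    set ρ : FF K := if i = 0 then 0 else zs (j + 1) (i - 1) with hρdef
    have hμ : μ = DbarF v - aseq j * v := hzsS j i
    have hstar : DF μ - b' * μ = H (j + 1) * v - ρ := P2 i (by omega)
    have hstar' : DbarF (DF μ) - (b' * DbarF μ + μ * DbarF b')
        = (H (j + 1) * DbarF v + v * DbarF (H (j + 1))) - DbarF ρ := by
      have := congrArg DbarF hstar
      rwa [map_sub, map_sub, Derivation.leibniz, Derivation.leibniz, smul_eq_mul,
        smul_eq_mul, smul_eq_mul, smul_eq_mul] at this
    have hρ' : (if i = 0 then (0 : FF K) else zs (j + 1 + 1) (i - 1))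
        = DbarF ρ - aseq (j + 1) * ρ := by
      by_cases hi0 : i = 0
      · rw [if_pos hi0, hρdef, if_pos hi0]
        simp
      · rw [if_neg hi0, hρdef, if_neg hi0, hzsS]
    have hA1 : aseq (j + 1) = aseq j + DbarF (H (j + 1)) / H (j + 1) := haseqS j
    have hF1' : - DF (aseq (j + 1)) + DbarF b' = H (j + 2) - H (j + 1) := hF1 (j + 1)
    rw [hzsS (j + 1) i, hρ']
    rw [map_sub, Derivation.leibniz, smul_eq_mul, smul_eq_mul, hcomm μ]
    linear_combination hstar' - aseq (j + 1) * hstar + μ * hF1' - v * hq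
      - H (j + 1) * v * hA1 - H (j + 1) * hμ

lemma cascade_htop (DF : Derivation K (FF K) (FF K)) (b' : FF K) (H : ℕ → FF K) (k : ℕ)
    (zs : ℕ → ℕ → FF K)
    (core : ∀ j ≤ k, zs (j + 1) (k - j) = 0 ∧
      ∀ i ≤ k - j, DF (zs (j + 1) i) - b' * zs (j + 1) i
        = H (j + 1) * zs j i - (if i = 0 then 0 else zs (j + 1) (i - 1))) :
    ∀ j, j + 1 ≤ k → zs (j + 1) (k - (j + 1)) = H (j + 1) * zs j (k - j) := by
  intro j hjk
  obtain ⟨P1, P2⟩ := core j (by omega)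
  have h2 := P2 (k - j) le_rfl
  rw [P1, map_zero, if_neg (by omega : ¬ (k - j = 0))] at h2
  have h3 : k - j - 1 = k - (j + 1) := by omega
  rw [h3] at h2
  linear_combination h2

lemma cascade_tau (DF : Derivation K (FF K) (FF K)) (b' : FF K) (H : ℕ → FF K) (k : ℕ)
    (zs : ℕ → ℕ → FF K)
    (htop : ∀ j, j + 1 ≤ k → zs (j + 1) (k - (j + 1)) = H (j + 1) * zs j (k - j)) :
    ∀ j ≤ k, zs j (k - j) = (∏ i ∈ Finset.Icc 1 j, H i) * zs 0 k := by
  intro j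
  induction j with
  | zero => intro _; simp
  | succ j ih =>
    intro hjk
    rw [htop j hjk, ih (by omega), Finset.prod_Icc_succ_top (by omega : 1 ≤ j + 1)]
    ring

lemma cascade_M (DF : Derivation K (FF K) (FF K)) (b' : FF K) (H : ℕ → FF K) (k : ℕ)
    (zs : ℕ → ℕ → FF K)
    (core : ∀ j ≤ k, zs (j + 1) (k - j) = 0 ∧
      ∀ i ≤ k - j, DF (zs (j + 1) i) - b' * zs (j + 1) i
        = H (j + 1) * zs j i - (if i = 0 then 0 else zs (j + 1) (i - 1)))
    (htop : ∀ j, j + 1 ≤ k → zs (j + 1) (k - (j + 1)) = H (j + 1) * zs j (k - j)) :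
    ∀ j, j + 1 ≤ k → ∀ w : FF K,
      DF (opApply ⇑DF (zs (j + 1)) (k - (j + 1)) w)
          - b' * opApply ⇑DF (zs (j + 1)) (k - (j + 1)) w
        = H (j + 1) * opApply ⇑DF (zs j) (k - j) w := by
  intro j hjk w
  obtain ⟨P1, P2⟩ := core j (by omega)
  set n := k - (j + 1) with hndef
  have hn : k - j = n + 1 := by omega
  rw [hn]
  unfold opApply
  have e1 : DF (∑ i ∈ Finset.range (n + 1), zs (j + 1) i * (⇑DF)^[i] w)
      - b' * ∑ i ∈ Finset.range (n + 1), zs (j + 1) i * (⇑DF)^[i] w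
      = ∑ i ∈ Finset.range (n + 1),
        ((DF (zs (j + 1) i) - b' * zs (j + 1) i) * (⇑DF)^[i] w
          + zs (j + 1) i * (⇑DF)^[i + 1] w) := by
    rw [map_sum DF _ _, Finset.mul_sum, ← Finset.sum_sub_distrib]
    refine Finset.sum_congr rfl ?_
    intro i _
    rw [Derivation.leibniz, smul_eq_mul, smul_eq_mul,
      ← Function.iterate_succ_apply' ⇑DF i w]
    ring
  rw [e1]
  have e2 : ∀ i ∈ Finset.range (n + 1),
      (DF (zs (j + 1) i) - b' * zs (j + 1) i) * (⇑DF)^[i] w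
          + zs (j + 1) i * (⇑DF)^[i + 1] w
      = (H (j + 1) * zs j i - (if i = 0 then 0 else zs (j + 1) (i - 1))) * (⇑DF)^[i] w
          + zs (j + 1) i * (⇑DF)^[i + 1] w := by
    intro i hi
    rw [P2 i (by simp [Finset.mem_range] at hi; omega)]
  rw [Finset.sum_congr rfl e2]
  have e3 : ∑ i ∈ Finset.range (n + 1),
      ((H (j + 1) * zs j i - (if i = 0 then 0 else zs (j + 1) (i - 1))) * (⇑DF)^[i] w
        + zs (j + 1) i * (⇑DF)^[i + 1] w)
      = (∑ i ∈ Finset.range (n + 1), H (j + 1) * (zs j i * (⇑DF)^[i] w))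
        - (∑ i ∈ Finset.range (n + 1),
            (if i = 0 then (0 : FF K) else zs (j + 1) (i - 1)) * (⇑DF)^[i] w)
        + ∑ i ∈ Finset.range (n + 1), zs (j + 1) i * (⇑DF)^[i + 1] w := by
    rw [← Finset.sum_sub_distrib, ← Finset.sum_add_distrib]
    refine Finset.sum_congr rfl ?_
    intro i _
    ring
  rw [e3]
  have e4 : ∑ i ∈ Finset.range (n + 1),
      (if i = 0 then (0 : FF K) else zs (j + 1) (i - 1)) * (⇑DF)^[i] w
      = ∑ i ∈ Finset.range n, zs (j + 1) i * (⇑DF)^[i + 1] w := by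
    rw [Finset.sum_range_succ' (fun i =>
      (if i = 0 then (0 : FF K) else zs (j + 1) (i - 1)) * (⇑DF)^[i] w) n]
    simp
  rw [e4, Finset.sum_range_succ (fun i => zs (j + 1) i * (⇑DF)^[i + 1] w) n]
  have e5 : zs (j + 1) n = H (j + 1) * zs j (n + 1) := by
    rw [← hn]
    exact htop j hjk
  rw [Finset.sum_range_succ (fun i => zs j i * (⇑DF)^[i] w) (n + 1), ← Finset.mul_sum, e5]
  ring

lemma cascade_peel (DF : Derivation K (FF K) (FF K)) (b' : FF K) (H : ℕ → FF K) (k : ℕ)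
    (zs : ℕ → ℕ → FF K)
    (hHnz : ∀ i : ℕ, 1 ≤ i → i ≤ k → H i ≠ 0)
    (hM : ∀ j, j + 1 ≤ k → ∀ w : FF K,
      DF (opApply ⇑DF (zs (j + 1)) (k - (j + 1)) w)
          - b' * opApply ⇑DF (zs (j + 1)) (k - (j + 1)) w
        = H (j + 1) * opApply ⇑DF (zs j) (k - j) w) :
    ∀ j ≤ k, ∀ v : FF K,
      lapAux ⇑DF b' H j (opApply ⇑DF (zs j) (k - j)) v = opApply ⇑DF (zs 0) (k - 0) v := by
  intro j
  induction j with
  | zero => intro _ v; rfl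
  | succ j ih =>
    intro hjk v
    show lapAux ⇑DF b' H (j + 1) (opApply ⇑DF (zs (j + 1)) (k - (j + 1))) v = _
    simp only [lapAux]
    have hfun : (fun b => (DF (opApply ⇑DF (zs (j + 1)) (k - (j + 1)) b)
        - b' * opApply ⇑DF (zs (j + 1)) (k - (j + 1)) b) / H (j + 1))
        = opApply ⇑DF (zs j) (k - j) := by
      funext b
      rw [hM j hjk b, mul_div_cancel_left₀ _ (hHnz (j + 1) (by omega) hjk)]
    rw [hfun]
    exact ih (by omega) v

set_option maxHeartbeats 1000000 in
theorem statement6'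
    (F : RR K)
    (D Dbar : Derivation K (RR K) (RR K)) (hDD : IsTotalDerPair F D Dbar)
    (DF DbarF : Derivation K (FF K) (FF K))
    (hDF : ExtendsTo D DF) (hDbarF : ExtendsTo Dbar DbarF)
    (H : ℕ → FF K)
    (hH : H = Hseq ⇑DF ⇑DbarF (algebraMap (RR K) (FF K) (H0R F Dbar))
      (algebraMap (RR K) (FF K) (H1R F D)))
    (k : ℕ) (ξ : ℕ → RR K) (hdrv : IsDriver F D Dbar k ξ)
    (hHnz : ∀ i : ℕ, 1 ≤ i → i ≤ k → H i ≠ 0) :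
    H (k + 1) = 0 ∧ Dbar (ξ k) = pderiv (Var.u 1) F * ξ k ∧
    (∀ p : RR K, algebraMap (RR K) (FF K) (opApply ⇑D ξ k p) =
      lapM ⇑DF (algebraMap (RR K) (FF K) (pderiv (Var.ubar 0) F)) H
        (algebraMap (RR K) (FF K) (ξ k)) (k + 1) (algebraMap (RR K) (FF K) p)) := by
  set φ := algebraMap (RR K) (FF K) with hφdef
  have hcomm := DFDbarF_comm F D Dbar hDD DF DbarF hDF hDbarF
  have hA := driver_coeffs F D Dbar hDD.hDx hDD.hDbarx k ξ hdrv
  have hEk : Eop F Dbar (ξ k) = 0 := by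
    have h := hA (k + 1) le_rfl
    unfold Acoef at h
    rw [if_neg (by omega : ¬ (k + 1 ≤ k)), if_pos (by omega : 1 ≤ k + 1)] at h
    simpa using h
  have part2 : Dbar (ξ k) = pderiv (Var.u 1) F * ξ k := by
    have h := hEk
    unfold Eop at h
    exact sub_eq_zero.mp h
  -- the twisted coefficients and Laplace cascade in the fraction field
  set aseq : ℕ → FF K := fun j => Nat.rec (motive := fun _ => FF K)
    (φ (pderiv (Var.u 1) F)) (fun j aj => aj + DbarF (H (j + 1)) / H (j + 1)) j with haseqdef
  have haseq0 : aseq 0 = φ (pderiv (Var.u 1) F) := rfl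
  have haseqS : ∀ j, aseq (j + 1) = aseq j + DbarF (H (j + 1)) / H (j + 1) := fun j => rfl
  set zs : ℕ → ℕ → FF K := fun j => Nat.rec (motive := fun _ => ℕ → FF K)
    (fun i => φ (ξ i)) (fun j zj i => DbarF (zj i) - aseq j * zj i) j with hzsdef
  have hzs0 : ∀ i, zs 0 i = φ (ξ i) := fun _ => rfl
  have hzsS : ∀ j i, zs (j + 1) i = DbarF (zs j i) - aseq j * zs j i := fun _ _ => rfl
  have hzs1 : ∀ i, zs 1 i = DbarF (zs 0 i) - aseq 0 * zs 0 i := fun _ => rfl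
  have hH0 : H 0 = φ (H0R F Dbar) := by rw [hH]; rfl
  have hH1 : H 1 = φ (H1R F D) := by rw [hH]; rfl
  have hHrec : ∀ n : ℕ,
      H (n + 2) = 2 * H (n + 1) - H n - DF (DbarF (H (n + 1)) / H (n + 1)) := by
    intro n
    rw [hH]
    rfl
  have hF1 : ∀ j, - DF (aseq j) + DbarF (φ (pderiv (Var.ubar 0) F)) = H (j + 1) - H j := by
    intro j
    induction j with
    | zero =>
      rw [haseq0, hDF, hDbarF, hH1, hH0, ← map_neg, ← map_add, ← map_sub]
      congr 1
      unfold H1R H0R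
      ring
    | succ j ih =>
      rw [haseqS j, map_add, hHrec j]
      linear_combination ih
  have hbase1 : zs 1 k = 0 := by
    rw [hzs1 k, hzs0 k, haseq0, hDbarF]
    have h : φ (Dbar (ξ k)) - φ (pderiv (Var.u 1) F) * φ (ξ k) = φ (Eop F Dbar (ξ k)) := by
      unfold Eop
      rw [map_sub, map_mul]
    rw [h, hEk, map_zero]
  have hbase2 : ∀ i ≤ k, DF (zs 1 i) - φ (pderiv (Var.ubar 0) F) * zs 1 i
      = H 1 * zs 0 i - (if i = 0 then 0 else zs 1 (i - 1)) := by
    intro i hik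
    have hid : DF (zs 1 i) - φ (pderiv (Var.ubar 0) F) * zs 1 i - H 1 * zs 0 i
        = φ (Lop F D Dbar (ξ i)) := by
      rw [hzs1 i, hzs0 i, haseq0, map_sub, Derivation.leibniz, smul_eq_mul, smul_eq_mul,
        hDbarF (ξ i), hDF (Dbar (ξ i)), hDF (ξ i), hDF (pderiv (Var.u 1) F), hH1]
      unfold Lop H1R
      rw [map_sub, map_sub, map_sub, map_mul, map_mul, map_mul, map_add, map_add,
        map_neg, map_mul]
      ring
    have hLA : φ (Lop F D Dbar (ξ i)) = - (if i = 0 then 0 else zs 1 (i - 1)) := by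
      have h := hA i (by omega)
      unfold Acoef at h
      rw [if_pos hik] at h
      by_cases hi0 : i = 0
      · rw [if_pos hi0]
        rw [hi0, if_neg (by omega : ¬ (1 ≤ 0)), add_zero] at h
        rw [hi0, h, map_zero, neg_zero]
      · rw [if_neg hi0]
        rw [if_pos (by omega : 1 ≤ i)] at h
        have hz : zs 1 (i - 1) = φ (Eop F Dbar (ξ (i - 1))) := by
          rw [hzs1, hzs0, haseq0]
          unfold Eop
          rw [map_sub, map_mul, hDbarF]
        rw [hz, ← map_neg]
        exact congrArg φ (by linear_combination h)
    linear_combination hid + hLA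
  have core := cascade_core DF DbarF hcomm (φ (pderiv (Var.ubar 0) F)) H aseq haseqS hF1
    k hHnz zs hzsS hbase1 hbase2
  have htop := cascade_htop DF (φ (pderiv (Var.ubar 0) F)) H k zs core
  have htau := cascade_tau DF (φ (pderiv (Var.ubar 0) F)) H k zs htop
  have hM := cascade_M DF (φ (pderiv (Var.ubar 0) F)) H k zs core htop
  have hpeel := cascade_peel DF (φ (pderiv (Var.ubar 0) F)) H k zs hHnz hM
  have hzk0 : zs k 0 = (∏ i ∈ Finset.Icc 1 k, H i) * φ (ξ k) := by
    have h := htau k le_rfl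
    rw [Nat.sub_self] at h
    rw [h, hzs0]
  have hzkne : zs k 0 ≠ 0 := by
    rw [hzk0]
    apply mul_ne_zero
    · rw [Finset.prod_ne_zero_iff]
      intro i hi
      exact hHnz i (Finset.mem_Icc.mp hi).1 (Finset.mem_Icc.mp hi).2
    · intro hc
      exact hdrv.1 ((map_eq_zero_iff φ (IsFractionRing.injective (RR K) (FF K))).mp hc)
  have part1 : H (k + 1) = 0 := by
    obtain ⟨Pk1, Pk2⟩ := core k le_rfl
    rw [Nat.sub_self] at Pk1 Pk2
    have h0 := Pk2 0 le_rfl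
    rw [Pk1, map_zero, if_pos rfl] at h0
    have h1 : H (k + 1) * zs k 0 = 0 := by linear_combination -h0
    exact (mul_eq_zero.mp h1).resolve_right hzkne
  refine ⟨part1, part2, ?_⟩
  intro p
  have hL : φ (opApply ⇑D ξ k p) = opApply ⇑DF (zs 0) (k - 0) (φ p) := by
    unfold opApply
    rw [map_sum φ _ _]
    refine Finset.sum_congr rfl ?_
    intro i _
    rw [map_mul, extendsTo_iterate D DF hDF i p, hzs0 i]
  have hfun : (fun w => (∏ i ∈ Finset.Icc 1 k, H i) * φ (ξ k) * w)
      = opApply ⇑DF (zs k) (k - k) := by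
    funext w
    unfold opApply
    rw [Nat.sub_self, Finset.sum_range_one, hzk0]
    rfl
  have hlap : lapM ⇑DF (φ (pderiv (Var.ubar 0) F)) H (φ (ξ k)) (k + 1) (φ p)
      = lapAux ⇑DF (φ (pderiv (Var.ubar 0) F)) H k (opApply ⇑DF (zs k) (k - k)) (φ p) := by
    unfold lapM
    simp only [Nat.add_sub_cancel]
    rw [hfun]
  rw [hL, hlap, ← hpeel k le_rfl (φ p)]

/-- if the equation admits an x-symmetry driver, k is the smallest
driver order and H₁,…,H_k ≠ 0, then (i) H_{k+1} = 0, (ii) there is a nonzero ψ with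
D̄(ψ) = F_{u₁}·ψ, and (iii) every driver of order k is given by the Laplace
factorization formula with r = k + 1 for some such ψ. -/
theorem statement6
    (F : RR K) (hF : F ∈ MvPolynomial.supported K Fvars)
    (D Dbar : Derivation K (RR K) (RR K)) (hDD : IsTotalDerPair F D Dbar)
    (DF DbarF : Derivation K (FF K) (FF K))
    (hDF : ExtendsTo D DF) (hDbarF : ExtendsTo Dbar DbarF)
    (H : ℕ → FF K)
    (hH : H = Hseq ⇑DF ⇑DbarF (algebraMap (RR K) (FF K) (H0R F Dbar))
      (algebraMap (RR K) (FF K) (H1R F D)))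
    (k : ℕ) (hex : ∃ ξ : ℕ → RR K, IsDriver F D Dbar k ξ)
    (hmin : ∀ k' < k, ∀ ξ' : ℕ → RR K, ¬ IsDriver F D Dbar k' ξ')
    (hHnz : ∀ i : ℕ, 1 ≤ i → i ≤ k → H i ≠ 0) :
    H (k + 1) = 0 ∧
    (∃ ψ : RR K, ψ ≠ 0 ∧ Dbar ψ = pderiv (Var.u 1) F * ψ) ∧
    (∀ ξ : ℕ → RR K, IsDriver F D Dbar k ξ →
      ∃ ψ : RR K, ψ ≠ 0 ∧ Dbar ψ = pderiv (Var.u 1) F * ψ ∧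
        ∀ a : RR K,
          algebraMap (RR K) (FF K) (opApply ⇑D ξ k a) =
            lapM ⇑DF (algebraMap (RR K) (FF K) (pderiv (Var.ubar 0) F)) H
              (algebraMap (RR K) (FF K) ψ) (k + 1) (algebraMap (RR K) (FF K) a)) := by
  obtain ⟨ξ₀, hdrv₀⟩ := hex
  obtain ⟨p1, p2, p3⟩ := statement6' F D Dbar hDD DF DbarF hDF hDbarF H hH k ξ₀ hdrv₀ hHnz
  refine ⟨p1, ⟨ξ₀ k, hdrv₀.1, p2⟩, ?_⟩
  intro ξ hξ
  obtain ⟨_, q2, q3⟩ := statement6' F D Dbar hDD DF DbarF hDF hDbarF H hH k ξ hξ hHnz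
  exact ⟨ξ k, hξ.1, q2, q3⟩
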